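/- Let A ⊆ {1,…,N} satisfy 1 ≤ r_N(A) ≤ (N+1)/2, and let a be the left-most site of A. Then r(s_a(A)) = r_N(A), and for every a' ∈ A with a' ≠ a one has r(s_{a'}(A)) ≥ (N+3)/2; in particular r(s_a(A)) < r(s_{a'}(A)). (Equation (property_left-most) of the Supplemental Material.) -/
import Mathlib


/-- `projN N i` is the unique element of `{1, …, N}` congruent to `i` mod `N`. -/
def projN (N i : ℤ) : ℤ := (i - 1) % N + 1

/-- The cut `s_n` of the chain: `s_n i = i` if `i ≥ n`, and `i + N` if `i < n`. -/
def cutN (N n i : ℤ) : ℤ := if n ≤ i then i else i + N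

/-- The range `r(A) = max A - min A + 1` of a finite nonempty set, with `r(∅) = 0`. -/
def rng (A : Finset ℤ) : ℤ := if h : A.Nonempty then A.max' h - A.min' h + 1 else 0

/-- `r_N(A) = min over n ∈ {1,…,N} of r(s_n(A))`. -/
noncomputable def rN (N : ℤ) (A : Finset ℤ) : ℤ :=
  sInf ((fun n => rng (A.image (cutN N n))) '' Set.Icc 1 N)

lemma int_eq_of_dvd {N u v : ℤ} (h : N ∣ u - v) (h1 : u - v < N) (h2 : v - u < N) : u = v := by
  obtain ⟨k, hk⟩ := h
  have hN : 0 < N := by nlinarith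
  have hk0 : k = 0 := by
    rcases lt_trichotomy k 0 with h | h | h
    · nlinarith
    · exact h
    · nlinarith
  subst hk0
  omega

lemma projN_bounds {N : ℤ} (hN : 1 ≤ N) (j : ℤ) :
    1 ≤ projN N j ∧ projN N j ≤ N ∧ N ∣ (j - projN N j) := by
  unfold projN
  have h0 := Int.emod_nonneg (j - 1) (by omega : N ≠ 0)
  have h1 := Int.emod_lt_of_pos (j - 1) (by omega : 0 < N)
  have h2 := Int.emod_add_mul_ediv (j - 1) N
  exact ⟨by omega, by omega, ⟨(j - 1) / N, by linarith⟩⟩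

lemma projN_id {N x : ℤ} (hN : 1 ≤ N) (hx1 : 1 ≤ x) (hx2 : x ≤ N) : projN N x = x := by
  obtain ⟨p1, p2, p3⟩ := projN_bounds hN x
  exact int_eq_of_dvd (dvd_sub_comm.mp p3) (by omega) (by omega)

lemma cut_bounds {N n x : ℤ} (hN : 1 ≤ N) (hn1 : 1 ≤ n) (hn2 : n ≤ N)
    (hx1 : 1 ≤ x) (hx2 : x ≤ N) :
    n ≤ cutN N n x ∧ cutN N n x ≤ n + N - 1 ∧ N ∣ (x - cutN N n x) := by
  unfold cutN
  split
  · exact ⟨by omega, by omega, ⟨0, by ring⟩⟩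
  · exact ⟨by omega, by omega, ⟨-1, by ring⟩⟩

lemma cut_eq {N n j : ℤ} (hN : 1 ≤ N) (hn1 : 1 ≤ n) (hn2 : n ≤ N)
    (hj1 : n ≤ j) (hj2 : j ≤ n + N - 1) : cutN N n (projN N j) = j := by
  obtain ⟨p1, p2, p3⟩ := projN_bounds hN j
  obtain ⟨c1, c2, c3⟩ := cut_bounds hN hn1 hn2 p1 p2
  have hd : N ∣ cutN N n (projN N j) - j := by
    have := dvd_add c3 p3
    have h' : j - cutN N n (projN N j) = (projN N j - cutN N n (projN N j)) + (j - projN N j) := by ring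
    have := (dvd_neg).2 (h' ▸ this)
    simpa using this
  exact int_eq_of_dvd hd (by omega) (by omega)

/-- Eq. (property_left-most) of the Supplemental Material: If
`A ⊆ {1,…,N}` with `1 ≤ r_N(A) ≤ (N+1)/2` and `a` is the left-most site of
`A`, then `r(s_a(A)) = r_N(A)`, and for every `a' ∈ A` with `a' ≠ a` one has
`r(s_{a'}(A)) ≥ (N+3)/2`; in particular `r(s_a(A)) < r(s_{a'}(A))`. -/
theorem leftmost_site_property (N : ℤ) (hN : 1 ≤ N)
    (A : Finset ℤ) (hA : A ⊆ Finset.Icc 1 N)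
    (h1 : 1 ≤ rN N A) (h2 : 2 * rN N A ≤ N + 1)
    (a : ℤ) (ha : a ∈ A) (ha1 : projN N (a + rN N A - 1) ∈ A)
    (ha2 : A ⊆ (Finset.Icc a (a + rN N A - 1)).image (projN N)) :
    rng (A.image (cutN N a)) = rN N A ∧
      ∀ a' ∈ A, a' ≠ a →
        N + 3 ≤ 2 * rng (A.image (cutN N a')) ∧
          rng (A.image (cutN N a)) < rng (A.image (cutN N a')) := by

  set r := rN N A with hr
  have hrN : r ≤ N := by omega
  have haB : 1 ≤ a ∧ a ≤ N := Finset.mem_Icc.1 (hA ha)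
  -- every x ∈ A: cutN N a x lands in [a, a+r-1]
  have hrep : ∀ x ∈ A, ∃ j, a ≤ j ∧ j ≤ a + r - 1 ∧ projN N j = x ∧ cutN N a x = j := by
    intro x hx
    obtain ⟨j, hj, hjx⟩ := Finset.mem_image.1 (ha2 hx)
    obtain ⟨hj1, hj2⟩ := Finset.mem_Icc.1 hj
    exact ⟨j, hj1, hj2, hjx, by rw [← hjx]; exact cut_eq hN haB.1 haB.2 hj1 (by omega)⟩
  have hclaim : ∀ x ∈ A, a ≤ cutN N a x ∧ cutN N a x ≤ a + r - 1 := by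
    intro x hx
    obtain ⟨j, hj1, hj2, _, hcx⟩ := hrep x hx
    omega
  -- a ∈ image
  have hcaa : cutN N a a = a := by
    have := cut_eq hN haB.1 haB.2 (le_refl a) (by omega : a ≤ a + N - 1)
    rwa [projN_id hN haB.1 haB.2] at this
  have hmem_a : a ∈ A.image (cutN N a) := Finset.mem_image.2 ⟨a, ha, hcaa⟩
  have hne : (A.image (cutN N a)).Nonempty := ⟨a, hmem_a⟩
  -- a + r - 1 ∈ image
  have hcar : cutN N a (projN N (a + r - 1)) = a + r - 1 :=
    cut_eq hN haB.1 haB.2 (by omega) (by omega)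
  have hmem_ar : a + r - 1 ∈ A.image (cutN N a) := Finset.mem_image.2 ⟨_, ha1, hcar⟩
  have hmax : (A.image (cutN N a)).max' hne = a + r - 1 := by
    apply le_antisymm
    · apply Finset.max'_le
      intro y hy
      obtain ⟨x, hx, hxy⟩ := Finset.mem_image.1 hy
      exact hxy ▸ (hclaim x hx).2
    · exact Finset.le_max' _ _ hmem_ar
  have hmin : (A.image (cutN N a)).min' hne = a := by
    apply le_antisymm
    · exact Finset.min'_le _ _ hmem_a
    · apply Finset.le_min'
      intro y hy
      obtain ⟨x, hx, hxy⟩ := Finset.mem_image.1 hy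
      exact hxy ▸ (hclaim x hx).1
  have part1 : rng (A.image (cutN N a)) = r := by
    unfold rng
    rw [dif_pos hne, hmax, hmin]
    ring
  refine ⟨part1, ?_⟩
  intro a' ha' hane
  have haB' : 1 ≤ a' ∧ a' ≤ N := Finset.mem_Icc.1 (hA ha')
  obtain ⟨j', hj1, hj2, hj3, _⟩ := hrep a' ha'
  have hjne : j' ≠ a := by
    intro h
    rw [h, projN_id hN haB.1 haB.2] at hj3
    exact hane hj3.symm
  -- min and max bounds for cut at a'
  have hmin' : ∀ x ∈ A, a' ≤ cutN N a' x := by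
    intro x hx
    obtain ⟨hx1, hx2⟩ := Finset.mem_Icc.1 (hA hx)
    exact (cut_bounds hN haB'.1 haB'.2 hx1 hx2).1
  have hcaa' : cutN N a' a' = a' := by
    have := cut_eq hN haB'.1 haB'.2 (le_refl a') (by omega : a' ≤ a' + N - 1)
    rwa [projN_id hN haB'.1 haB'.2] at this
  have hmem_a' : a' ∈ A.image (cutN N a') := Finset.mem_image.2 ⟨a', ha', hcaa'⟩
  have hne' : (A.image (cutN N a')).Nonempty := ⟨a', hmem_a'⟩
  -- cutN N a' a = a' + N + a - j'
  have hm : cutN N a' a = a' + N + a - j' := by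
    set m : ℤ := a' + N + a - j' with hmdef
    have hm1 : a' ≤ m := by omega
    have hm2 : m ≤ a' + N - 1 := by omega
    have hpm : projN N m = a := by
      obtain ⟨p1, p2, p3⟩ := projN_bounds hN m
      obtain ⟨q1, q2, q3⟩ := projN_bounds hN j'
      -- m ≡ a mod N since a' ≡ j' mod N
      have hd : N ∣ projN N m - a := by
        have hd1 : N ∣ projN N m - m := dvd_sub_comm.mp p3
        have hd2 : N ∣ a' - j' := hj3 ▸ dvd_sub_comm.mp q3
        have e : projN N m - a = (projN N m - m) + (a' - j') + N := by omega
        rw [e]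
        exact dvd_add (dvd_add hd1 hd2) dvd_rfl
      exact int_eq_of_dvd hd (by omega) (by omega)
    have := cut_eq hN haB'.1 haB'.2 hm1 hm2
    rwa [hpm] at this
  have hmem_m : a' + N + a - j' ∈ A.image (cutN N a') := Finset.mem_image.2 ⟨a, ha, hm⟩
  have hmaxge : a' + N + a - j' ≤ (A.image (cutN N a')).max' hne' := Finset.le_max' _ _ hmem_m
  have hminle : (A.image (cutN N a')).min' hne' ≤ a' := Finset.min'_le _ _ hmem_a'
  have hrng' : N - r + 2 ≤ rng (A.image (cutN N a')) := by
    unfold rng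
    rw [dif_pos hne']
    omega
  exact ⟨by omega, by rw [part1]; omega⟩
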